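/- Let 0 < q < 1. The series ∑_{n=0}^∞ C(2n,n) q^n (1−q)^n diverges (i.e. fails to be summable) if and only if q = 1/2. Consequently, the nearest-neighbour random walk on ℤ with p(x,x+1) = q, p(x,x−1) = 1−q has E^0[V_0] = ∑_n p_{2n} = ∞ exactly when q = 1/2: it is recurrent for q = 1/2 and transient for q ≠ 1/2. -/

import Mathlib

lemma centralBinom_le_four_pow (n : ℕ) : Nat.centralBinom n ≤ 4 ^ n := by
  have h : Nat.centralBinom n ≤ ∑ i ∈ Finset.range (2 * n + 1), (2 * n).choose i := by
    exact Finset.single_le_sum (f := fun i => (2 * n).choose i)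
      (fun i _ => Nat.zero_le _) (Finset.mem_range.mpr (by omega))
  calc Nat.centralBinom n ≤ ∑ i ∈ Finset.range (2 * n + 1), (2 * n).choose i := h
    _ = 2 ^ (2 * n) := Nat.sum_range_choose (2 * n)
    _ = 4 ^ n := by rw [pow_mul]; norm_num

lemma summable_of_ne_half {q : ℝ} (h0 : 0 < q) (h1 : q < 1) (hq : q ≠ 1 / 2) :
    Summable (fun n : ℕ => (Nat.centralBinom n : ℝ) * q ^ n * (1 - q) ^ n) := by
  have hq1 : (0:ℝ) < 1 - q := by linarith
  set x : ℝ := q * (1 - q) with hx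
  have hx0 : 0 ≤ x := mul_nonneg h0.le hq1.le
  have hx4 : 4 * x < 1 := by
    have hne : q - 1/2 ≠ 0 := sub_ne_zero.mpr hq
    have : (q - 1/2)^2 > 0 := by positivity
    nlinarith
  refine Summable.of_nonneg_of_le (f := fun n : ℕ => (4 * x) ^ n) ?_ ?_
    (summable_geometric_of_lt_one (mul_nonneg (by norm_num) hx0) hx4)
  · intro n; positivity
  · intro n
    have h1 : (Nat.centralBinom n : ℝ) ≤ (4 : ℝ) ^ n := by
      exact_mod_cast centralBinom_le_four_pow n
    calc (Nat.centralBinom n : ℝ) * q ^ n * (1 - q) ^ n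
        = (Nat.centralBinom n : ℝ) * x ^ n := by rw [hx, mul_pow]; ring
      _ ≤ 4 ^ n * x ^ n := by
          apply mul_le_mul_of_nonneg_right h1 (by positivity)
      _ = (4 * x) ^ n := by rw [hx, mul_pow, mul_pow, ← mul_pow q]

lemma not_summable_half :
    ¬ Summable (fun n : ℕ => (Nat.centralBinom n : ℝ) * (1/2 : ℝ) ^ n * (1 - 1/2) ^ n) := by
  intro hs
  have hb : ∀ n : ℕ, (1 : ℝ) / (2 * (n + 1)) ≤
      (Nat.centralBinom n : ℝ) * (1/2 : ℝ) ^ n * (1 - 1/2) ^ n := by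
    intro n
    rcases Nat.eq_zero_or_pos n with rfl | hn
    · norm_num [Nat.centralBinom]
    · have h4 : (4 : ℝ) ^ n ≤ 2 * n * Nat.centralBinom n := by
        exact_mod_cast Nat.four_pow_le_two_mul_self_mul_centralBinom n hn
      have hpos : (0:ℝ) < (4:ℝ)^n := by positivity
      have hterm : (Nat.centralBinom n : ℝ) * (1/2 : ℝ) ^ n * (1 - 1/2) ^ n
          = (Nat.centralBinom n : ℝ) / 4 ^ n := by
        rw [show (1:ℝ) - 1/2 = 1/2 by norm_num, mul_assoc, ← mul_pow]
        norm_num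
        rw [div_pow, one_pow, mul_one_div]
      rw [hterm]
      rw [div_le_div_iff₀ (by positivity) hpos]
      have hn1 : (1:ℝ) ≤ n := by exact_mod_cast hn
      have h2n : (2 : ℝ) * n ≤ 2 * (n + 1) := by linarith
      nlinarith [Nat.centralBinom_pos n, (by exact_mod_cast (Nat.centralBinom_pos n) :
        (0:ℝ) < Nat.centralBinom n)]
  have hg : Summable (fun n : ℕ => (1 : ℝ) / (2 * (n + 1))) :=
    Summable.of_nonneg_of_le (fun n => by positivity) hb hs
  have hsum : Summable (fun n : ℕ => (1 : ℝ) / ((n:ℝ) + 1)) := by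
    have h2 := hg.mul_left 2
    convert h2 using 1
    rfl
    funext n
    field_simp
  have : Summable (fun n : ℕ => (1 : ℝ) / (n : ℝ)) := by
    rw [← summable_nat_add_iff 1]
    convert hsum using 2 with n
    rfl
    push_cast; ring
  exact Real.not_summable_one_div_natCast this

theorem stmt_3 (q : ℝ) (h0 : 0 < q) (h1 : q < 1) :
    (¬ Summable (fun n : ℕ => (Nat.centralBinom n : ℝ) * q ^ n * (1 - q) ^ n) ↔ q = 1 / 2)
    ∧ ((∑' n : ℕ, ENNReal.ofReal ((Nat.centralBinom n : ℝ) * q ^ n * (1 - q) ^ n)) = ⊤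
        ↔ q = 1 / 2) := by
  have key : ¬ Summable (fun n : ℕ => (Nat.centralBinom n : ℝ) * q ^ n * (1 - q) ^ n) ↔ q = 1 / 2 := by
    constructor
    · intro hns
      by_contra hq
      exact hns (summable_of_ne_half h0 h1 hq)
    · rintro rfl
      exact not_summable_half
  refine ⟨key, ?_⟩
  have hnn : ∀ n : ℕ, 0 ≤ (Nat.centralBinom n : ℝ) * q ^ n * (1 - q) ^ n := by
    intro n
    have : (0:ℝ) < 1 - q := by linarith
    positivity
  rw [← key]
  simp_rw [ENNReal.ofReal]
  rw [ENNReal.tsum_coe_eq_top_iff_not_summable_coe]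
  exact not_congr (summable_congr fun n => by rw [Real.coe_toNNReal _ (hnn n)])
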